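/- Let M_1 = [[1,1,1],[0,1,0],[1,1,0]], M_2 = [[0,1,0],[0,1,0],[1,1,1]], and let s_1,...,s_{2t} be positive integers with s_1 ≥ 2. Then the sum of all entries of the product M_1^{s_1-1} M_2^{s_2} M_1^{s_3} M_2^{s_4} ⋯ M_1^{s_{2t-1}} M_2^{s_{2t}} is strictly greater than 5^{-t/2} ∏_{i=1}^t (μ^{s_{2i-1}} - (1-μ)^{s_{2i-1}}), where μ = (1+√5)/2. -/

import Mathlib

open Finset Matrix Real goldenRatio

namespace APLB

noncomputable def A : Matrix (Fin 3) (Fin 3) ℝ := !![1,1,1;0,1,0;1,1,0]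
noncomputable def B : Matrix (Fin 3) (Fin 3) ℝ := !![0,1,0;0,1,0;1,1,1]

def Nn (X : Matrix (Fin 3) (Fin 3) ℝ) : Prop := ∀ i j, 0 ≤ X i j

lemma Nn.mul {X Y} (hX : Nn X) (hY : Nn Y) : Nn (X * Y) := by
  intro i j
  rw [Matrix.mul_apply]
  exact Finset.sum_nonneg fun k _ => mul_nonneg (hX i k) (hY k j)

lemma nnA : Nn A := by
  intro i j; fin_cases i <;> fin_cases j <;> norm_num [A]

lemma nnB : Nn B := by
  intro i j; fin_cases i <;> fin_cases j <;> norm_num [B]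

lemma Nn.pow {X} (hX : Nn X) (n : ℕ) : Nn (X ^ n) := by
  induction n with
  | zero => intro i j; rw [pow_zero]; by_cases h : i = j <;> simp [Matrix.one_apply, h]
  | succ n ih => rw [pow_succ]; exact ih.mul hX

lemma A_pow_02 (a : ℕ) : (A ^ a) 0 0 = Nat.fib (a + 1) ∧ (A ^ a) 0 2 = Nat.fib a := by
  induction a with
  | zero => simp [Matrix.one_apply]
  | succ a ih =>
    obtain ⟨h0, h2⟩ := ih
    rw [pow_succ]
    constructor
    · rw [Matrix.mul_apply, Fin.sum_univ_three, h0, h2]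
      simp [A, Nat.fib_add_two, Matrix.vecHead, Matrix.vecTail]
      ring
    · rw [Matrix.mul_apply, Fin.sum_univ_three, h0, h2]
      simp [A, Matrix.vecHead, Matrix.vecTail]

lemma A_pow_11 (a : ℕ) : (1:ℝ) ≤ (A ^ a) 1 1 := by
  induction a with
  | zero => simp [Matrix.one_apply]
  | succ a ih =>
    rw [pow_succ, Matrix.mul_apply, Fin.sum_univ_three]
    have h0 := (nnA.pow a) 1 0
    have h2 := (nnA.pow a) 1 2
    simp only [A] at ih h0 h2 ⊢
    norm_num [Matrix.vecHead, Matrix.vecTail, Matrix.cons_val_two]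
    linarith

lemma B_pow_11 (b : ℕ) : (1:ℝ) ≤ (B ^ b) 1 1 := by
  induction b with
  | zero => simp [Matrix.one_apply]
  | succ b ih =>
    rw [pow_succ, Matrix.mul_apply, Fin.sum_univ_three]
    have h0 := (nnB.pow b) 1 0
    have h2 := (nnB.pow b) 1 2
    simp only [B] at ih h0 h2 ⊢
    norm_num [Matrix.vecHead, Matrix.vecTail, Matrix.cons_val_two]
    linarith

lemma B_pow_2j (b : ℕ) (hb : 1 ≤ b) (j : Fin 3) (hj : j ≠ 2) : (1:ℝ) ≤ (B ^ b) 2 j := by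
  induction b with
  | zero => omega
  | succ b ih =>
    rcases Nat.eq_zero_or_pos b with rfl | hb'
    · fin_cases j <;> simp_all [B, Matrix.vecHead, Matrix.vecTail]
    · rw [pow_succ', Matrix.mul_apply, Fin.sum_univ_three]
      have h0 := (nnB.pow b) 0 j
      have h1 := (nnB.pow b) 1 j
      have h2 := ih hb'
      simp only [B] at h0 h1 h2 ⊢
      norm_num [Matrix.vecHead, Matrix.vecTail, Matrix.cons_val_two]
      linarith


lemma A_def : A = !![1,1,1;0,1,0;1,1,0] := rfl
lemma B_def : B = !![0,1,0;0,1,0;1,1,1] := rfl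

lemma entry_ge (X Y : Matrix (Fin 3) (Fin 3) ℝ) (hX : Nn X) (hY : Nn Y)
    (i k j : Fin 3) : X i k * Y k j ≤ (X * Y) i j := by
  rw [Matrix.mul_apply]
  have h : X i k * Y k j = ∑ l ∈ ({k} : Finset (Fin 3)), X i l * Y l j := by simp
  rw [h]
  exact Finset.sum_le_sum_of_subset_of_nonneg (by simp)
    (fun l _ _ => mul_nonneg (hX i l) (hY l j))

end APLB

open APLB

/-- Lower bound of Theorem 3: the sum of all entries of
`M₁^(s₁-1) M₂^(s₂) M₁^(s₃) M₂^(s₄) ⋯ M₁^(s_{2t-1}) M₂^(s_{2t})` is strictly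
greater than `5^(-t/2) ∏_{i=1}^t (μ^(s_{2i-1}) - (1-μ)^(s_{2i-1}))`,
where `μ = (1+√5)/2`. -/
theorem alternating_product_lower_bound (M₁ M₂ : Matrix (Fin 3) (Fin 3) ℝ)
    (hM₁ : M₁ = !![1,1,1;0,1,0;1,1,0]) (hM₂ : M₂ = !![0,1,0;0,1,0;1,1,1])
    (s : ℕ → ℕ) (hs : ∀ i, 1 ≤ s i) (hs1 : 2 ≤ s 1)
    (μ : ℝ) (hμ : μ = (1 + Real.sqrt 5) / 2)
    (P : ℕ → Matrix (Fin 3) (Fin 3) ℝ) (hP0 : P 0 = 1)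
    (hP : ∀ i, P (i + 1) =
      P i * M₁ ^ (if i = 0 then s 1 - 1 else s (2 * i + 1)) * M₂ ^ (s (2 * i + 2)))
    (t : ℕ) (ht : 1 ≤ t) :
    (5 : ℝ) ^ (-(t : ℝ) / 2) *
        ∏ i ∈ Finset.range t, (μ ^ s (2 * i + 1) - (1 - μ) ^ s (2 * i + 1)) <
      ∑ i, ∑ j, (P t) i j := by
  have hA : M₁ = A := hM₁.trans A_def.symm
  have hB : M₂ = B := hM₂.trans B_def.symm
  rw [hA, hB] at hP
  clear hM₁ hM₂ hA hB
  set F : ℕ → ℝ := fun n => (Nat.fib n : ℝ) with hF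
  have hFnn : ∀ n, 0 ≤ F n := fun n => Nat.cast_nonneg _
  set C : ℕ → ℝ := fun i => F (s 1 - 1) * ∏ j ∈ Finset.Ico 1 i, F (s (2*j+1)) with hC
  -- main induction
  have key : ∀ i, 1 ≤ i →
      Nn (P i) ∧ C i ≤ P i 0 0 ∧ C i ≤ P i 0 1 ∧ 1 ≤ P i 1 1 := by
    intro i hi
    induction i, hi using Nat.le_induction with
    | base =>
      have h1 : P 1 = A ^ (s 1 - 1) * B ^ (s 2) := by
        have := hP 0
        simp only [if_pos rfl, hP0, one_mul] at this
        simpa using this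
      have hC1 : C 1 = F (s 1 - 1) := by simp [hC]
      have hNnA := nnA.pow (s 1 - 1)
      have hNnB := nnB.pow (s 2)
      have hNn1 : Nn (P 1) := by rw [h1]; exact hNnA.mul hNnB
      refine ⟨hNn1, ?_, ?_, ?_⟩
      · rw [h1, hC1]
        calc F (s 1 - 1) = F (s 1 - 1) * 1 := by ring
          _ ≤ (A ^ (s 1 - 1)) 0 2 * (B ^ (s 2)) 2 0 := by
              apply mul_le_mul ((A_pow_02 _).2.symm.le)
                (B_pow_2j _ (hs 2) 0 (by decide)) (by norm_num) (hNnA 0 2)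
          _ ≤ _ := entry_ge _ _ hNnA hNnB 0 2 0
      · rw [h1, hC1]
        calc F (s 1 - 1) = F (s 1 - 1) * 1 := by ring
          _ ≤ (A ^ (s 1 - 1)) 0 2 * (B ^ (s 2)) 2 1 := by
              apply mul_le_mul ((A_pow_02 _).2.symm.le)
                (B_pow_2j _ (hs 2) 1 (by decide)) (by norm_num) (hNnA 0 2)
          _ ≤ _ := entry_ge _ _ hNnA hNnB 0 2 1
      · rw [h1]
        calc (1:ℝ) = 1 * 1 := by ring
          _ ≤ (A ^ (s 1 - 1)) 1 1 * (B ^ (s 2)) 1 1 := by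
              apply mul_le_mul (A_pow_11 _) (B_pow_11 _) (by norm_num)
                (le_trans zero_le_one (A_pow_11 _))
          _ ≤ _ := entry_ge _ _ hNnA hNnB 1 1 1
    | succ i hi ih =>
      obtain ⟨hNn, h00, _, h11⟩ := ih
      have hstep : P (i+1) = P i * A ^ (s (2*i+1)) * B ^ (s (2*i+2)) := by
        have := hP i
        rw [if_neg (by omega)] at this
        exact this
      set a := s (2*i+1)
      set b := s (2*i+2)
      have hNnA := nnA.pow a
      have hNnB := nnB.pow b
      have hNnX : Nn (P i * A ^ a) := hNn.mul hNnA
      have hNn' : Nn (P (i+1)) := by rw [hstep]; exact hNnX.mul hNnB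
      have hCsucc : C (i+1) = C i * F a := by
        simp only [hC]
        rw [Finset.prod_Ico_succ_top hi]
        ring
      have hCnn : 0 ≤ C i := mul_nonneg (hFnn _) (Finset.prod_nonneg fun j _ => hFnn _)
      have hX02 : C i * F a ≤ (P i * A ^ a) 0 2 :=
        calc C i * F a ≤ P i 0 0 * F a := mul_le_mul_of_nonneg_right h00 (hFnn a)
          _ = P i 0 0 * (A ^ a) 0 2 := by rw [(A_pow_02 a).2]
          _ ≤ _ := entry_ge _ _ hNn hNnA 0 0 2
      have h0j : ∀ j : Fin 3, j ≠ 2 → C (i+1) ≤ P (i+1) 0 j := by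
        intro j hj
        rw [hstep, hCsucc]
        calc C i * F a ≤ (P i * A ^ a) 0 2 * 1 := by rw [mul_one]; exact hX02
          _ ≤ (P i * A ^ a) 0 2 * (B ^ b) 2 j :=
            mul_le_mul_of_nonneg_left (B_pow_2j _ (hs _) j hj) (hNnX 0 2)
          _ ≤ _ := entry_ge _ _ hNnX hNnB 0 2 j
      have hX11 : (1:ℝ) ≤ (P i * A ^ a) 1 1 := by
        calc (1:ℝ) = 1 * 1 := by ring
          _ ≤ P i 1 1 * (A ^ a) 1 1 :=
            mul_le_mul h11 (A_pow_11 _) (by norm_num) (le_trans zero_le_one h11)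
          _ ≤ _ := entry_ge _ _ hNn hNnA 1 1 1
      refine ⟨hNn', h0j 0 (by decide), h0j 1 (by decide), ?_⟩
      rw [hstep]
      calc (1:ℝ) = 1 * 1 := by ring
        _ ≤ (P i * A ^ a) 1 1 * (B ^ b) 1 1 :=
          mul_le_mul hX11 (B_pow_11 _) (by norm_num) (le_trans zero_le_one hX11)
        _ ≤ _ := entry_ge _ _ hNnX hNnB 1 1 1
  obtain ⟨hNn, h00, h01, h11⟩ := key t ht
  -- sum of entries bound
  have hsum : P t 0 0 + P t 0 1 + P t 1 1 ≤ ∑ i, ∑ j, (P t) i j := by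
    simp only [Fin.sum_univ_three]
    have h02 := hNn 0 2
    have h10 := hNn 1 0
    have h12 := hNn 1 2
    have h20 := hNn 2 0
    have h21 := hNn 2 1
    have h22 := hNn 2 2
    linarith
  -- rewrite LHS as product of Fibonacci numbers
  have hfac : ∀ n : ℕ, μ ^ n - (1 - μ) ^ n = Real.sqrt 5 * F n := by
    intro n
    have h1 : (1:ℝ) - μ = goldenConj := by rw [hμ]; ring
    have h2 : μ = goldenRatio := hμ
    rw [h1, h2]
    show goldenRatio ^ n - goldenConj ^ n = Real.sqrt 5 * (Nat.fib n : ℝ)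
    rw [Real.coe_fib_eq n]
    have h5 : Real.sqrt 5 ≠ 0 := by positivity
    field_simp
  have hprod : ∏ i ∈ Finset.range t, (μ ^ s (2 * i + 1) - (1 - μ) ^ s (2 * i + 1))
      = (Real.sqrt 5) ^ t * ∏ i ∈ Finset.range t, F (s (2 * i + 1)) := by
    rw [Finset.prod_congr rfl (fun i _ => hfac (s (2*i+1))), Finset.prod_mul_distrib,
      Finset.prod_const, Finset.card_range]
  have h5t : (5 : ℝ) ^ (-(t : ℝ) / 2) * (Real.sqrt 5) ^ t = 1 := by
    rw [Real.sqrt_eq_rpow, ← Real.rpow_natCast ((5:ℝ) ^ ((1:ℝ)/2)) t,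
      ← Real.rpow_mul (by norm_num), ← Real.rpow_add (by norm_num)]
    rw [show -(t:ℝ)/2 + 1/2 * t = 0 by ring, Real.rpow_zero]
  have hLHS : (5 : ℝ) ^ (-(t : ℝ) / 2) *
      ∏ i ∈ Finset.range t, (μ ^ s (2 * i + 1) - (1 - μ) ^ s (2 * i + 1))
      = ∏ i ∈ Finset.range t, F (s (2 * i + 1)) := by
    rw [hprod, ← mul_assoc, h5t, one_mul]
  rw [hLHS]
  -- split off first factor
  have hsplit : ∏ i ∈ Finset.range t, F (s (2 * i + 1))
      = F (s 1) * ∏ i ∈ Finset.Ico 1 t, F (s (2 * i + 1)) := by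
    rw [Finset.range_eq_Ico, Finset.prod_eq_prod_Ico_succ_bot (by omega : 0 < t)]
  have hQnn : 0 ≤ ∏ i ∈ Finset.Ico 1 t, F (s (2 * i + 1)) :=
    Finset.prod_nonneg fun j _ => hFnn _
  have hfib2 : F (s 1) ≤ 2 * F (s 1 - 1) := by
    obtain ⟨k, hk⟩ := Nat.exists_eq_add_of_le hs1
    have : s 1 = k + 2 := by omega
    rw [this, show k + 2 - 1 = k + 1 by omega]
    have h : Nat.fib (k+2) ≤ 2 * Nat.fib (k+1) := by
      rw [Nat.fib_add_two]
      have := Nat.fib_le_fib_succ (n := k)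
      omega
    simp only [hF]
    exact_mod_cast h
  have hct : 0 ≤ C t := mul_nonneg (hFnn _) hQnn
  calc ∏ i ∈ Finset.range t, F (s (2 * i + 1))
      ≤ 2 * F (s 1 - 1) * ∏ i ∈ Finset.Ico 1 t, F (s (2 * i + 1)) := by
        rw [hsplit]; exact mul_le_mul_of_nonneg_right hfib2 hQnn
    _ = C t + C t := by rw [hC]; ring
    _ < P t 0 0 + P t 0 1 + P t 1 1 := by linarith
    _ ≤ _ := hsum
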